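/- arXiv:2007.13470 — 2 statements merged into one kernel-verified Lean document; each statement's English description precedes it below -/
import Mathlib

section
/- The stereographic projection of the n-sphere from the north pole to the tangent hyperplane at the south pole is conformal: its differential at each point is a similarity (scalar multiple of a linear isometry) from the tangent space of the sphere to the hyperplane. -/
open scoped RealInnerProductSpace

/-- The stereographic projection of the unit n-sphere from the north pole
`N = (0,…,0,1)` to the tangent hyperplane at the south pole `−N` is conformal: at every
point `P ≠ N` of the sphere it is differentiable and its differential restricted to the
tangent space `{v : ⟪v,P⟫ = 0}` of the sphere is a similarity (a scalar multiple of a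
linear isometry into the hyperplane's direction). -/
theorem stereographic_conformal (n : ℕ)
    (N : EuclideanSpace ℝ (Fin (n + 1))) (hN : N = WithLp.toLp 2 (fun i => if i = Fin.last n then 1 else 0))
    (σ : EuclideanSpace ℝ (Fin (n + 1)) → EuclideanSpace ℝ (Fin (n + 1)))
    (hσ : ∀ x, σ x = WithLp.toLp 2 (fun i =>
      if i = Fin.last n then -1 else 2 * x i / (1 - x (Fin.last n))))
    (P : EuclideanSpace ℝ (Fin (n + 1))) (hP : ‖P‖ = 1) (hPN : P ≠ N) :
    DifferentiableAt ℝ σ P ∧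
      ∃ c : ℝ, 0 < c ∧
        ∀ v w : EuclideanSpace ℝ (Fin (n + 1)), ⟪v, P⟫ = 0 → ⟪w, P⟫ = 0 →
          ⟪fderiv ℝ σ P v, fderiv ℝ σ P w⟫ = c ^ 2 * ⟪v, w⟫ := by
  set l := Fin.last n with hl
  have hNi : ∀ i, N i = if i = l then 1 else 0 := fun i => by rw [hN]
  set π : EuclideanSpace ℝ (Fin (n + 1)) →L[ℝ] ℝ := EuclideanSpace.proj l with hπ
  have hπa : ∀ x : EuclideanSpace ℝ (Fin (n + 1)), π x = x l := fun x => rfl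
  have innN : ∀ v : EuclideanSpace ℝ (Fin (n + 1)), ⟪v, N⟫ = v l := by
    intro v
    simp [PiLp.inner_apply, hNi, mul_ite]
  have innN' : ∀ v : EuclideanSpace ℝ (Fin (n + 1)), ⟪N, v⟫ = v l := by
    intro v; rw [real_inner_comm]; exact innN v
  have hNorm : ‖N‖ = 1 := by
    have h1 : ⟪N, N⟫ = 1 := by rw [innN N, hNi l]; simp
    have := real_inner_self_eq_norm_sq N
    nlinarith [norm_nonneg N]
  set t := P l with ht
  have hPP : ⟪P, P⟫ = (1:ℝ) := by
    rw [real_inner_self_eq_norm_sq, hP]; norm_num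
  have hPN' : ⟪P, N⟫ = t := innN P
  have hle : t ≤ 1 := by
    calc t = ⟪P, N⟫ := hPN'.symm
      _ ≤ ‖P‖ * ‖N‖ := real_inner_le_norm P N
      _ = 1 := by rw [hP, hNorm]; ring
  have htlt : t < 1 := by
    rcases lt_or_eq_of_le hle with h | h
    · exact h
    · exact absurd ((inner_eq_one_iff_of_norm_eq_one hP hNorm).mp (by rw [hPN', h])) hPN
  have hne : (1 : ℝ) - t ≠ 0 := by linarith
  have hne' : (1 : ℝ) - π P ≠ 0 := by rw [hπa]; exact hne
  -- the linear map x ↦ x - (x l) • N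
  set h' : EuclideanSpace ℝ (Fin (n + 1)) →L[ℝ] EuclideanSpace ℝ (Fin (n + 1)) := ContinuousLinearMap.id ℝ (EuclideanSpace ℝ (Fin (n + 1))) - π.smulRight N with hh'
  have hσfun : σ = fun x : EuclideanSpace ℝ (Fin (n + 1)) => (2 * (1 - π x)⁻¹) • (x - π x • N) - N := by
    funext x
    rw [hσ x]
    ext i
    simp only [PiLp.sub_apply, PiLp.smul_apply, hπa, hNi, smul_eq_mul]
    by_cases hi : i = l
    · subst hi; simp
    · simp [hi]
      ring
  have hden : HasFDerivAt (fun x : EuclideanSpace ℝ (Fin (n + 1)) => 1 - π x) ((0 : EuclideanSpace ℝ (Fin (n + 1)) →L[ℝ] ℝ) - π) P :=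
    (hasFDerivAt_const (1:ℝ) P).sub π.hasFDerivAt
  have hinv : HasFDerivAt (fun x : EuclideanSpace ℝ (Fin (n + 1)) => (1 - π x)⁻¹)
      ((-(((1 - π P)) ^ 2)⁻¹) • ((0 : EuclideanSpace ℝ (Fin (n + 1)) →L[ℝ] ℝ) - π)) P :=
    (hasDerivAt_inv hne').comp_hasFDerivAt P hden
  have hcf : HasFDerivAt (fun x : EuclideanSpace ℝ (Fin (n + 1)) => 2 * (1 - π x)⁻¹)
      ((2:ℝ) • ((-(((1 - π P)) ^ 2)⁻¹) • ((0 : EuclideanSpace ℝ (Fin (n + 1)) →L[ℝ] ℝ) - π))) P :=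
    hinv.const_mul 2
  have hhfun : (fun x : EuclideanSpace ℝ (Fin (n + 1)) => x - π x • N) = ⇑h' := by
    funext x
    simp [hh']
  have hhh : HasFDerivAt (fun x : EuclideanSpace ℝ (Fin (n + 1)) => x - π x • N) h' P := by
    rw [hhfun]; exact h'.hasFDerivAt
  have hD1 : HasFDerivAt (fun x : EuclideanSpace ℝ (Fin (n + 1)) => (2 * (1 - π x)⁻¹) • (x - π x • N) - N) _ P :=
    (hcf.smul hhh).sub_const N
  rw [← hσfun] at hD1
  have h0 : (0:ℝ) < 1 - t := by linarith
  refine ⟨hD1.differentiableAt, 2 * (1 - t)⁻¹, by positivity, ?_⟩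
  intro v w hv hw
  have hvP : ⟪P, v⟫ = 0 := by rw [real_inner_comm]; exact hv
  have hwP : ⟪P, w⟫ = 0 := by rw [real_inner_comm]; exact hw
  have hNl : N l = 1 := by rw [hNi]; simp
  rw [hD1.fderiv]
  simp only [ContinuousLinearMap.add_apply, ContinuousLinearMap.coe_smul', Pi.smul_apply,
    ContinuousLinearMap.smulRight_apply, ContinuousLinearMap.sub_apply,
    ContinuousLinearMap.zero_apply, ContinuousLinearMap.id_apply, ContinuousLinearMap.coe_sub',
    Pi.sub_apply, smul_eq_mul, hh', hπa, PiLp.smul_apply, PiLp.sub_apply, hNl]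
  simp only [inner_add_left, inner_add_right, inner_sub_left, inner_sub_right,
    real_inner_smul_left, real_inner_smul_right, innN, innN', hPP, hv, hw, hvP, hwP, hπa,
    PiLp.smul_apply, PiLp.sub_apply, smul_eq_mul, hNl]
  rw [← ht]
  field_simp
  ring
end

section
/- Spherical inversion is conformal: at any point A ≠ Z, the differential of ι is a similarity, with similarity ratio r²/|A−Z|². -/
open scoped RealInnerProductSpace
open EuclideanGeometry

/-- Spherical inversion is conformal: at any point `A ≠ Z` it is differentiable and its
differential is a similarity with similarity ratio `r²/|A−Z|²`. -/
theorem inversion_conformal {n : ℕ} (Z : EuclideanSpace ℝ (Fin n)) (r : ℝ) (hr : 0 < r)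
    (A : EuclideanSpace ℝ (Fin n)) (hA : A ≠ Z) :
    DifferentiableAt ℝ
        (fun B : EuclideanSpace ℝ (Fin n) => Z + (r ^ 2 / ‖B - Z‖ ^ 2) • (B - Z)) A ∧
      (∀ v : EuclideanSpace ℝ (Fin n),
        ‖fderiv ℝ (fun B : EuclideanSpace ℝ (Fin n) =>
            Z + (r ^ 2 / ‖B - Z‖ ^ 2) • (B - Z)) A v‖ = r ^ 2 / ‖A - Z‖ ^ 2 * ‖v‖) ∧
      ∀ v w : EuclideanSpace ℝ (Fin n),
        ⟪fderiv ℝ (fun B : EuclideanSpace ℝ (Fin n) =>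
            Z + (r ^ 2 / ‖B - Z‖ ^ 2) • (B - Z)) A v,
          fderiv ℝ (fun B : EuclideanSpace ℝ (Fin n) =>
            Z + (r ^ 2 / ‖B - Z‖ ^ 2) • (B - Z)) A w⟫
          = (r ^ 2 / ‖A - Z‖ ^ 2) ^ 2 * ⟪v, w⟫ := by
  have hfun : (fun B : EuclideanSpace ℝ (Fin n) => Z + (r ^ 2 / ‖B - Z‖ ^ 2) • (B - Z))
      = inversion Z r := by
    funext B
    simp only [inversion_def, dist_eq_norm, div_pow, vsub_eq_sub, vadd_eq_add]
    ring_nf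
    abel
  have hd := hasFDerivAt_inversion (c := Z) (R := r) (x := A) hA
  have hfd : fderiv ℝ (fun B : EuclideanSpace ℝ (Fin n) =>
      Z + (r ^ 2 / ‖B - Z‖ ^ 2) • (B - Z)) A
      = (r / dist A Z) ^ 2 • ((Submodule.reflection (ℝ ∙ (A - Z))ᗮ : EuclideanSpace ℝ (Fin n) ≃ₗᵢ[ℝ]
          EuclideanSpace ℝ (Fin n)) : EuclideanSpace ℝ (Fin n) →L[ℝ] EuclideanSpace ℝ (Fin n)) := by
    rw [hfun]; exact hd.fderiv
  have hcoef : (r / dist A Z) ^ 2 = r ^ 2 / ‖A - Z‖ ^ 2 := by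
    rw [dist_eq_norm, div_pow]
  have hnn : (0:ℝ) ≤ r ^ 2 / ‖A - Z‖ ^ 2 := by positivity
  refine ⟨hfun ▸ hd.differentiableAt, ?_, ?_⟩
  · intro v
    rw [hfd]
    simp only [ContinuousLinearMap.coe_smul', Pi.smul_apply, norm_smul, hcoef,
      Real.norm_eq_abs, abs_of_nonneg hnn]
    congr 1
    exact (Submodule.reflection (ℝ ∙ (A - Z))ᗮ).norm_map v
  · intro v w
    rw [hfd]
    simp only [ContinuousLinearMap.coe_smul', Pi.smul_apply, hcoef]
    rw [real_inner_smul_left, real_inner_smul_right,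
      (show (⟪((Submodule.reflection (ℝ ∙ (A - Z))ᗮ : EuclideanSpace ℝ (Fin n) ≃ₗᵢ[ℝ]
          EuclideanSpace ℝ (Fin n)) : EuclideanSpace ℝ (Fin n) →L[ℝ] EuclideanSpace ℝ (Fin n)) v,
        ((Submodule.reflection (ℝ ∙ (A - Z))ᗮ : EuclideanSpace ℝ (Fin n) ≃ₗᵢ[ℝ]
          EuclideanSpace ℝ (Fin n)) : EuclideanSpace ℝ (Fin n) →L[ℝ] EuclideanSpace ℝ (Fin n)) w⟫
        : ℝ) = ⟪v, w⟫ from (Submodule.reflection (ℝ ∙ (A - Z))ᗮ).inner_map_map v w)]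
    ring
end
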